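/- Let X be a CAT(0) cube complex with the l¹ path metric, embedded via hyperplane coordinates into the cube C ⊆ l¹(H). Then the restriction of the l¹-metric of C to the image A of X coincides with the path metric induced on A; consequently the embedding X → C is an isometry. -/

import Mathlib

/-- An abstract model of a CAT(0) cube complex via its halfspace structure: each hyperplane `h`
has an outward halfspace `plus h` not containing the basepoint `x0`; every vertex lies outward
of only finitely many hyperplanes; and every pairwise-consistent orientation differing from the
basepoint orientation in finitely many hyperplanes is realized by a vertex. -/
structure CubeSystem (V H : Type*) where
  plus : H → Set V
  x0 : V
  basepoint : ∀ h, x0 ∉ plus h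
  plus_nonempty : ∀ h, (plus h).Nonempty
  plus_injective : ∀ h k, plus h = plus k → h = k
  vertexFinite : ∀ x : V, {h | x ∈ plus h}.Finite
  lowerFinite : ∀ h, {k | plus h ⊂ plus k}.Finite
  realize : ∀ o : H → Bool, {h | o h = true}.Finite →
    (∀ h k : H,
      ((if o h then plus h else (plus h)ᶜ) ∩ (if o k then plus k else (plus k)ᶜ)).Nonempty) →
    ∃ x : V, ∀ h, x ∈ plus h ↔ o h = true

namespace CubeSystem

variable {V H : Type*} (M : CubeSystem V H)

/-- `h < k`: the outward halfspace of `h` strictly contains that of `k`. -/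
def Lt (h k : H) : Prop := M.plus k ⊂ M.plus h

/-- Two hyperplanes are opposite if their outward halfspaces are disjoint. -/
def Opp (h k : H) : Prop := M.plus h ∩ M.plus k = ∅

/-- The canonical embedding of a vertex into the cube `C ⊆ l¹(H)`: the characteristic
function of the set of hyperplanes separating the basepoint from `x`. -/
noncomputable def vmap (x : V) : H → ℝ := fun h => by
  classical exact if x ∈ M.plus h then 1 else 0

/-- Membership in the cube `C`: finitely supported with values in `[0,1]`. -/
def memC (ξ : H → ℝ) : Prop := (∀ h, ξ h ∈ Set.Icc (0:ℝ) 1) ∧ {h | ξ h ≠ 0}.Finite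

/-- `ξ` is intervalic: for every opposite pair `h, k`, `ξ_h = 0` or `ξ_k = 0`. -/
def Intervalic (ξ : H → ℝ) : Prop := ∀ h k, M.Opp h k → ξ h = 0 ∨ ξ k = 0

/-- `ξ` is actual: for every pair `h < k`, `ξ_h = 1` or `ξ_k = 0`. -/
def Actual (ξ : H → ℝ) : Prop := ∀ h k, M.Lt h k → ξ h = 1 ∨ ξ k = 0

end CubeSystem

namespace CubeSystem

/-- Membership in `A ⊆ l¹(H)`: a point of the cube (coordinates in `[0,1]`, finitely
supported) which is intervalic and actual, i.e. a point of the embedded image of `X`. -/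
def memA {V H : Type*} (M : CubeSystem V H) (ξ : lp (fun _ : H => ℝ) 1) : Prop :=
  (∀ h, ξ h ∈ Set.Icc (0:ℝ) 1) ∧ {h | ξ h ≠ 0}.Finite ∧
    (∀ h k, M.Opp h k → ξ h = 0 ∨ ξ k = 0) ∧ (∀ h k, M.Lt h k → ξ h = 1 ∨ ξ k = 0)

end CubeSystem

namespace Stmt15Aux

open Set
open scoped ENNReal NNReal

variable {V H : Type*}

/-- A single-coordinate bump in `l¹(H)`. -/
noncomputable def sgl (h0 : H) (c : ℝ) : lp (fun _ : H => ℝ) 1 :=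
  letI := Classical.decEq H
  lp.single 1 h0 c

lemma sgl_apply_self (h0 : H) (c : ℝ) : sgl h0 c h0 = c := by
  letI := Classical.decEq H
  exact lp.single_apply_self (E := fun _ : H => ℝ) 1 h0 c

lemma sgl_apply_ne (h0 : H) (c : ℝ) {h : H} (hh : h ≠ h0) : sgl h0 c h = 0 := by
  letI := Classical.decEq H
  exact lp.single_apply_ne (E := fun _ : H => ℝ) 1 h0 c hh

lemma sgl_smul (h0 : H) (s c : ℝ) : sgl h0 (s * c) = s • sgl h0 c := by
  letI := Classical.decEq H
  exact lp.single_smul (E := fun _ : H => ℝ) 1 h0 s c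

lemma one_toReal_pos : (0:ℝ) < (1 : ℝ≥0∞).toReal := by
  rw [ENNReal.toReal_one]; norm_num

lemma norm_sgl (h0 : H) (c : ℝ) : ‖sgl h0 c‖ = |c| := by
  letI := Classical.decEq H
  have := lp.norm_single (E := fun _ : H => ℝ) one_pos h0 c
  rw [Real.norm_eq_abs] at this; exact this

/-- Updating a single coordinate of a point of `l¹(H)`. -/
noncomputable def upd (ξ : lp (fun _ : H => ℝ) 1) (h0 : H) (c : ℝ) : lp (fun _ : H => ℝ) 1 :=
  ξ + sgl h0 c

lemma upd_apply_self (ξ : lp (fun _ : H => ℝ) 1) (h0 : H) (c : ℝ) :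
    upd ξ h0 c h0 = ξ h0 + c := by
  have : upd ξ h0 c h0 = ξ h0 + sgl h0 c h0 := by
    rw [upd, lp.coeFn_add]; rfl
  rw [this, sgl_apply_self]

lemma upd_apply_ne (ξ : lp (fun _ : H => ℝ) 1) (h0 : H) (c : ℝ) {h : H} (hh : h ≠ h0) :
    upd ξ h0 c h = ξ h := by
  have : upd ξ h0 c h = ξ h + sgl h0 c h := by
    rw [upd, lp.coeFn_add]; rfl
  rw [this, sgl_apply_ne _ _ hh, add_zero]

lemma edist_upd (ξ : lp (fun _ : H => ℝ) 1) (h0 : H) (c : ℝ) :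
    edist ξ (upd ξ h0 c) = ENNReal.ofReal |c| := by
  rw [edist_dist, dist_eq_norm]
  congr 1
  have : ξ - upd ξ h0 c = -(sgl h0 c) := by rw [upd]; abel
  rw [this, norm_neg, norm_sgl]

lemma edist_triangle_eq (ξ ζ η : lp (fun _ : H => ℝ) 1)
    (h : ∀ h', dist (ξ h') (η h') = dist (ξ h') (ζ h') + dist (ζ h') (η h')) :
    edist ξ η = edist ξ ζ + edist ζ η := by
  rw [edist_dist, edist_dist, edist_dist, ← ENNReal.ofReal_add dist_nonneg dist_nonneg]
  congr 1
  have h1 := lp.hasSum_norm one_toReal_pos (ξ - η)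
  have h2 := lp.hasSum_norm one_toReal_pos (ξ - ζ)
  have h3 := lp.hasSum_norm one_toReal_pos (ζ - η)
  simp only [ENNReal.toReal_one, Real.rpow_one] at h1 h2 h3
  rw [dist_eq_norm, dist_eq_norm, dist_eq_norm]
  refine h1.unique ?_
  have hfun : (fun i => ‖(ξ - η) i‖) = fun i => ‖(ξ - ζ) i‖ + ‖(ζ - η) i‖ := by
    funext i
    have hi := h i
    simp only [lp.coeFn_sub, Pi.sub_apply]
    rw [← dist_eq_norm, ← dist_eq_norm, ← dist_eq_norm]
    exact hi
  rw [hfun]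
  exact h2.add h3

lemma continuousOn_union_of_isClosed {α β : Type*} [TopologicalSpace α] [TopologicalSpace β]
    {f : α → β} {s t : Set α} (hs : IsClosed s) (ht : IsClosed t)
    (hfs : ContinuousOn f s) (hft : ContinuousOn f t) : ContinuousOn f (s ∪ t) := by
  intro x hx
  rw [continuousWithinAt_union]
  constructor
  · by_cases hxs : x ∈ s
    · exact hfs x hxs
    · exact continuousWithinAt_of_notMem_closure (by rwa [hs.closure_eq])
  · by_cases hxt : x ∈ t
    · exact hft x hxt
    · exact continuousWithinAt_of_notMem_closure (by rwa [ht.closure_eq])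

lemma lip_line (ξ w : lp (fun _ : H => ℝ) 1) :
    LipschitzWith ‖w‖₊ (fun u : ℝ => ξ + u • w) := by
  apply LipschitzWith.of_dist_le_mul
  intro u v
  have : dist (ξ + u • w) (ξ + v • w) = ‖w‖ * dist u v := by
    rw [dist_eq_norm, add_sub_add_left_eq_sub, ← sub_smul, norm_smul, Real.norm_eq_abs,
      Real.dist_eq, mul_comm]
  rw [this, coe_nnnorm]

lemma diff_finite {M : CubeSystem V H} {ξ η : lp (fun _ : H => ℝ) 1}
    (hξ : M.memA ξ) (hη : M.memA η) : {h | ξ h ≠ η h}.Finite := by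
  apply (hξ.2.1.union hη.2.1).subset
  intro h hh
  by_contra hcon
  simp only [Set.mem_union, Set.mem_setOf_eq, not_or, not_not] at hcon
  exact hh (by rw [hcon.1, hcon.2])

lemma memA_upd (M : CubeSystem V H) {ξ : lp (fun _ : H => ℝ) 1} (hξ : M.memA ξ)
    (h0 : H) (c : ℝ) (hc : ξ h0 + c ∈ Icc (0:ℝ) 1)
    (hZ : ∀ k, M.Opp h0 k → ξ k = 0)
    (hU : ∀ k, M.Lt h0 k → ξ k = 0)
    (hO : ∀ k, M.Lt k h0 → ξ k = 1) :
    M.memA (upd ξ h0 c) := by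
  obtain ⟨hb, hfin, hint, hact⟩ := hξ
  have hZ' : ∀ k, M.Opp k h0 → ξ k = 0 := by
    intro k hk
    apply hZ k
    unfold CubeSystem.Opp at hk ⊢
    rwa [Set.inter_comm]
  refine ⟨?_, ?_, ?_, ?_⟩
  · intro h
    by_cases hh : h = h0
    · subst hh; rw [upd_apply_self]; exact hc
    · rw [upd_apply_ne _ _ _ hh]; exact hb h
  · apply (hfin.insert h0).subset
    intro h hh
    by_cases hhh : h = h0
    · exact Or.inl hhh
    · right
      simp only [Set.mem_setOf_eq] at hh ⊢
      rwa [upd_apply_ne _ _ _ hhh] at hh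
  · intro h k hopp
    by_cases hh : h = h0 <;> by_cases hk : k = h0
    · exfalso
      have hpp : M.plus h ∩ M.plus k = ∅ := hopp
      rw [hh, hk, Set.inter_self] at hpp
      exact (M.plus_nonempty h0).ne_empty hpp
    · subst hh; right; rw [upd_apply_ne _ _ _ hk]; exact hZ k hopp
    · subst hk; left; rw [upd_apply_ne _ _ _ hh]; exact hZ' h hopp
    · rw [upd_apply_ne _ _ _ hh, upd_apply_ne _ _ _ hk]; exact hint h k hopp
  · intro h k hlt
    by_cases hh : h = h0 <;> by_cases hk : k = h0
    · exfalso
      have hpp : M.plus k ⊂ M.plus h := hlt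
      rw [hh, hk] at hpp
      exact (ssubset_irrefl _) hpp
    · subst hh; right; rw [upd_apply_ne _ _ _ hk]; exact hU k hlt
    · subst hk; left; rw [upd_apply_ne _ _ _ hh]; exact hO h hlt
    · rw [upd_apply_ne _ _ _ hh, upd_apply_ne _ _ _ hk]; exact hact h k hlt

lemma exists_step (M : CubeSystem V H) {ξ η : lp (fun _ : H => ℝ) 1}
    (hξ : M.memA ξ) (hη : M.memA η) (hne : ∃ h, ξ h ≠ η h) :
    ∃ h0, ξ h0 ≠ η h0 ∧
      ∀ s ∈ Icc (0:ℝ) 1, M.memA (upd ξ h0 (s * (η h0 - ξ h0))) := by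
  classical
  by_cases hA : ∃ h, η h < ξ h
  · -- there is a coordinate to decrease
    have hDecfin : {h | η h < ξ h}.Finite :=
      (diff_finite hξ hη).subset (fun h hh => ne_of_gt hh)
    obtain ⟨h1, hh1⟩ := hA
    set T : Finset (Set V) := hDecfin.toFinset.image M.plus with hT
    have hTne : T.Nonempty :=
      ⟨M.plus h1, Finset.mem_image_of_mem _ (hDecfin.mem_toFinset.mpr hh1)⟩
    obtain ⟨s0, hs0T, hs0min⟩ : ∃ s0 ∈ T, ∀ x ∈ T, ¬ x < s0 := by
      obtain ⟨i, hi⟩ := T.exists_minimal hTne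
      exact ⟨i, hi.prop, fun x hx => hi.not_lt hx⟩
    obtain ⟨h0, hh0mem, hh0eq⟩ := Finset.mem_image.mp hs0T
    have hh0 : η h0 < ξ h0 := hDecfin.mem_toFinset.mp hh0mem
    have hmax : ∀ k, M.Lt h0 k → ¬ η k < ξ k := by
      intro k hk hkD
      refine hs0min (M.plus k)
        (Finset.mem_image_of_mem _ (hDecfin.mem_toFinset.mpr hkD)) ?_
      rw [← hh0eq]
      exact HasSSubset.SSubset.lt hk
    have hx0pos : 0 < ξ h0 := lt_of_le_of_lt (hη.1 h0).1 hh0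
    refine ⟨h0, ne_of_gt hh0, ?_⟩
    intro s hs
    apply memA_upd M hξ h0 _ ?_ ?_ ?_ ?_
    · -- bounds
      have b1 := (hξ.1 h0).1; have b2 := (hξ.1 h0).2
      have b3 := (hη.1 h0).1; have b4 := (hη.1 h0).2
      constructor
      · nlinarith [mul_nonneg hs.1 b3, mul_nonneg (by linarith [hs.2] : (0:ℝ) ≤ 1 - s) b1]
      · nlinarith [mul_nonneg hs.1 (by linarith : (0:ℝ) ≤ 1 - η h0),
          mul_nonneg (by linarith [hs.2] : (0:ℝ) ≤ 1 - s) (by linarith : (0:ℝ) ≤ 1 - ξ h0)]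
    · intro k hopp
      exact (hξ.2.2.1 h0 k hopp).resolve_left (ne_of_gt hx0pos)
    · intro k hk
      by_contra hkne
      have hk1 : ξ h0 = 1 := (hξ.2.2.2 h0 k hk).resolve_right hkne
      have hk2 : η k = 0 := by
        rcases hη.2.2.2 h0 k hk with h | h
        · exfalso; rw [hk1] at hh0; linarith [h ▸ hh0]
        · exact h
      apply hmax k hk
      rw [hk2]
      rcases lt_or_eq_of_le (hξ.1 k).1 with h | h
      · exact h
      · exact absurd h.symm hkne
    · intro k hk
      exact (hξ.2.2.2 k h0 hk).resolve_right (ne_of_gt hx0pos)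
  · -- all coordinates increase
    push_neg at hA
    obtain ⟨h1, hne1⟩ := hne
    have hh1 : ξ h1 < η h1 := lt_of_le_of_ne (hA h1) hne1
    have hIncfin : {h | ξ h < η h}.Finite :=
      (diff_finite hξ hη).subset (fun h hh => ne_of_lt hh)
    set T : Finset (Set V) := hIncfin.toFinset.image M.plus with hT
    have hTne : T.Nonempty :=
      ⟨M.plus h1, Finset.mem_image_of_mem _ (hIncfin.mem_toFinset.mpr hh1)⟩
    obtain ⟨s0, hs0T, hs0max⟩ : ∃ s0 ∈ T, ∀ x ∈ T, ¬ s0 < x := by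
      obtain ⟨i, hi⟩ := T.exists_maximal hTne
      exact ⟨i, hi.prop, fun x hx => hi.not_gt hx⟩
    obtain ⟨h0, hh0mem, hh0eq⟩ := Finset.mem_image.mp hs0T
    have hh0 : ξ h0 < η h0 := hIncfin.mem_toFinset.mp hh0mem
    have hmin : ∀ k, M.Lt k h0 → ¬ ξ k < η k := by
      intro k hk hkD
      refine hs0max (M.plus k)
        (Finset.mem_image_of_mem _ (hIncfin.mem_toFinset.mpr hkD)) ?_
      rw [← hh0eq]
      exact HasSSubset.SSubset.lt hk
    have hy0pos : 0 < η h0 := lt_of_le_of_lt (hξ.1 h0).1 hh0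
    refine ⟨h0, ne_of_lt hh0, ?_⟩
    intro s hs
    apply memA_upd M hξ h0 _ ?_ ?_ ?_ ?_
    · have b1 := (hξ.1 h0).1; have b2 := (hξ.1 h0).2
      have b3 := (hη.1 h0).1; have b4 := (hη.1 h0).2
      constructor
      · nlinarith [mul_nonneg hs.1 b3, mul_nonneg (by linarith [hs.2] : (0:ℝ) ≤ 1 - s) b1]
      · nlinarith [mul_nonneg hs.1 (by linarith : (0:ℝ) ≤ 1 - η h0),
          mul_nonneg (by linarith [hs.2] : (0:ℝ) ≤ 1 - s) (by linarith : (0:ℝ) ≤ 1 - ξ h0)]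
    · intro k hopp
      have hek : η k = 0 := (hη.2.2.1 h0 k hopp).resolve_left (ne_of_gt hy0pos)
      exact le_antisymm (hek ▸ hA k) (hξ.1 k).1
    · intro k hk
      by_contra hkne
      have hk1 : ξ h0 = 1 := (hξ.2.2.2 h0 k hk).resolve_right hkne
      have := (hη.1 h0).2
      linarith [hk1 ▸ hh0]
    · intro k hk
      have hek : η k = 1 := (hη.2.2.2 k h0 hk).resolve_right (ne_of_gt hy0pos)
      by_contra hkne
      exact hmin k hk (lt_of_le_of_ne (hA k) (by rw [hek]; exact hkne))

lemma const_path (M : CubeSystem V H) {η : lp (fun _ : H => ℝ) 1} (hη : M.memA η)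
    (a b : ℝ) :
    ∃ γ : ℝ → lp (fun _ : H => ℝ) 1, γ a = η ∧ γ b = η ∧ ContinuousOn γ (Icc a b) ∧
      (∀ t ∈ Icc a b, M.memA (γ t)) ∧ eVariationOn γ (Icc a b) ≤ edist η η := by
  refine ⟨fun _ => η, rfl, rfl, continuousOn_const, fun _ _ => hη, ?_⟩
  rw [eVariationOn.constant_on]
  · exact zero_le
  · rintro x ⟨t, _, rfl⟩ y ⟨u, _, rfl⟩; rfl

lemma exists_path (M : CubeSystem V H) :
    ∀ (n : ℕ) (ξ η : lp (fun _ : H => ℝ) 1), M.memA ξ → M.memA η →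
      {h | ξ h ≠ η h}.ncard ≤ n → ∀ a b : ℝ, a < b →
      ∃ γ : ℝ → lp (fun _ : H => ℝ) 1, γ a = ξ ∧ γ b = η ∧ ContinuousOn γ (Icc a b) ∧
        (∀ t ∈ Icc a b, M.memA (γ t)) ∧ eVariationOn γ (Icc a b) ≤ edist ξ η := by
  intro n
  induction n with
  | zero =>
    intro ξ η hξ hη hcard a b hab
    have hD : {h | ξ h ≠ η h} = ∅ :=
      (Set.ncard_eq_zero (diff_finite hξ hη)).mp (Nat.le_zero.mp hcard)
    have hxy : ξ = η := by
      apply lp.ext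
      funext h
      by_contra hcon
      exact absurd hD (Set.nonempty_iff_ne_empty.mp ⟨h, hcon⟩)
    subst hxy
    exact const_path M hξ a b
  | succ n ih =>
    intro ξ η hξ hη hcard a b hab
    by_cases hne : ∃ h, ξ h ≠ η h
    swap
    · have hxy : ξ = η := by
        apply lp.ext; funext h
        by_contra hcon
        exact hne ⟨h, hcon⟩
      subst hxy
      exact const_path M hξ a b
    obtain ⟨h0, hne0, hstep⟩ := exists_step M hξ hη hne
    set d : ℝ := η h0 - ξ h0 with hd
    set w : lp (fun _ : H => ℝ) 1 := sgl h0 d with hw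
    set ζ : lp (fun _ : H => ℝ) 1 := upd ξ h0 d with hζdef
    have hζ : M.memA ζ := by
      have := hstep 1 ⟨zero_le_one, le_refl 1⟩
      rwa [one_mul] at this
    have hζ0 : ζ h0 = η h0 := by
      rw [hζdef, upd_apply_self, hd]; ring
    have hζh : ∀ h, h ≠ h0 → ζ h = ξ h := by
      intro h hh
      rw [hζdef, upd_apply_ne _ _ _ hh]
    -- cardinality decreases
    have hDfin := diff_finite hξ hη
    have hsub : {h | ζ h ≠ η h} ⊆ {h | ξ h ≠ η h} \ {h0} := by
      intro h hh
      simp only [Set.mem_setOf_eq] at hh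
      have hne' : h ≠ h0 := by rintro rfl; exact hh hζ0
      refine ⟨?_, hne'⟩
      simp only [Set.mem_setOf_eq]
      rwa [← hζh h hne']
    have hcard' : {h | ζ h ≠ η h}.ncard ≤ n := by
      have h1 := Set.ncard_le_ncard hsub hDfin.diff
      have h2 := Set.ncard_diff_singleton_lt_of_mem
        (show h0 ∈ {h | ξ h ≠ η h} from hne0) hDfin
      omega
    set m : ℝ := (a + b) / 2 with hm
    have ham : a < m := by rw [hm]; linarith
    have hmb : m < b := by rw [hm]; linarith
    obtain ⟨δ, hδa, hδb, hδcont, hδmem, hδvar⟩ := ih ζ η hζ hη hcard' m b hmb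
    have hma : (0:ℝ) < m - a := by linarith
    set g : ℝ → ℝ := fun t => (t - a) / (m - a) with hg
    set σ : ℝ → lp (fun _ : H => ℝ) 1 := fun t => ξ + g t • w with hσ
    have hσupd : ∀ t, σ t = upd ξ h0 (g t * d) := by
      intro t
      rw [hσ]
      show ξ + g t • w = upd ξ h0 (g t * d)
      rw [upd, sgl_smul, hw]
    have hga : g a = 0 := by rw [hg]; simp
    have hgm : g m = 1 := by rw [hg]; field_simp
    have hσa : σ a = ξ := by
      show ξ + g a • w = ξ
      rw [hga, zero_smul, add_zero]
    have hσm : σ m = ζ := by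
      rw [hσupd, hgm, one_mul, ← hζdef]
    have hσmem : ∀ t ∈ Icc a m, M.memA (σ t) := by
      intro t ht
      rw [hσupd]
      refine hstep (g t) ⟨div_nonneg (by linarith [ht.1]) hma.le, ?_⟩
      rw [hg]
      exact (div_le_one hma).mpr (by linarith [ht.2])
    have hgcont : Continuous g := by
      rw [hg]; exact (continuous_id.sub continuous_const).div_const _
    have hσcont : Continuous σ := by
      rw [hσ]; exact continuous_const.add (hgcont.smul continuous_const)
    -- variation of σ
    have hσvar : eVariationOn σ (Icc a m) ≤ edist ξ ζ := by
      have hlip := lip_line ξ w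
      have hcomp : eVariationOn σ (Icc a m) ≤ ‖w‖₊ * eVariationOn g (Icc a m) := by
        have := LipschitzOnWith.comp_eVariationOn_le
          (hlip.lipschitzOnWith (s := Set.univ)) (g := g) (s := Icc a m)
          (Set.mapsTo_univ _ _)
        exact this
      have hmono : MonotoneOn g (Icc a m) := by
        intro x _ y _ hxy
        show (x - a) / (m - a) ≤ (y - a) / (m - a)
        gcongr
      have hgvar : eVariationOn g (Icc a m) ≤ 1 := by
        have h := hmono.eVariationOn_le (left_mem_Icc.mpr ham.le) (right_mem_Icc.mpr ham.le)
        rw [Set.inter_self] at h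
        refine h.trans ?_
        rw [hgm, hga, sub_zero, ENNReal.ofReal_one]
      have hζdist : edist ξ ζ = ENNReal.ofReal |d| := by
        rw [hζdef]; exact edist_upd ξ h0 d
      calc eVariationOn σ (Icc a m) ≤ ‖w‖₊ * eVariationOn g (Icc a m) := hcomp
        _ ≤ ‖w‖₊ * 1 := by gcongr
        _ = ‖w‖₊ := mul_one _
        _ = ENNReal.ofReal ‖w‖ := (ofReal_norm w).symm
        _ = ENNReal.ofReal |d| := by rw [hw, norm_sgl]
        _ = edist ξ ζ := hζdist.symm
    -- glue
    set γ : ℝ → lp (fun _ : H => ℝ) 1 := fun t => if t ≤ m then σ t else δ t with hγ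
    have hγσ : EqOn γ σ (Icc a m) := fun t ht => if_pos ht.2
    have hγδ : EqOn γ δ (Icc m b) := by
      intro t ht
      by_cases h : t ≤ m
      · have htm : t = m := le_antisymm h ht.1
        rw [hγ]
        show (if t ≤ m then σ t else δ t) = δ t
        rw [if_pos h, htm, hσm, ← hδa]
      · rw [hγ]
        show (if t ≤ m then σ t else δ t) = δ t
        rw [if_neg h]
    have hcontγ : ContinuousOn γ (Icc a b) := by
      rw [← Set.Icc_union_Icc_eq_Icc ham.le hmb.le]
      exact continuousOn_union_of_isClosed isClosed_Icc isClosed_Icc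
        (hσcont.continuousOn.congr hγσ) (hδcont.congr hγδ)
    have hdist_eq : edist ξ η = edist ξ ζ + edist ζ η := by
      apply edist_triangle_eq
      intro h
      by_cases hh : h = h0
      · subst hh
        rw [hζ0, dist_self, add_zero]
      · rw [hζh h hh, dist_self, zero_add]
    refine ⟨γ, ?_, ?_, hcontγ, ?_, ?_⟩
    · have : γ a = σ a := hγσ (left_mem_Icc.mpr ham.le)
      rw [this, hσa]
    · have : γ b = δ b := hγδ (right_mem_Icc.mpr hmb.le)
      rw [this, hδb]
    · intro t ht
      by_cases h : t ≤ m
      · rw [hγσ ⟨ht.1, h⟩]; exact hσmem t ⟨ht.1, h⟩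
      · rw [hγδ ⟨(not_le.mp h).le, ht.2⟩]
        exact hδmem t ⟨(not_le.mp h).le, ht.2⟩
    · have key := eVariationOn.Icc_add_Icc γ (s := Icc a b) ham.le hmb.le
        ⟨ham.le, hmb.le⟩
      have e1 : Icc a b ∩ Icc a m = Icc a m := by
        rw [Set.Icc_inter_Icc, sup_idem, inf_eq_right.mpr hmb.le]
      have e2 : Icc a b ∩ Icc m b = Icc m b := by
        rw [Set.Icc_inter_Icc, inf_idem, sup_eq_right.mpr ham.le]
      have e3 : Icc a b ∩ Icc a b = Icc a b := Set.inter_self _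
      rw [e1, e2, e3] at key
      rw [← key, hdist_eq]
      refine add_le_add ?_ ?_
      · rw [eVariationOn.eq_of_eqOn hγσ]; exact hσvar
      · rw [eVariationOn.eq_of_eqOn hγδ]; exact hδvar

end Stmt15Aux

/-- The `l¹`-metric restricted to the embedded image `A` of `X` in `l¹(H)` coincides with the
induced path metric on `A`: for `ξ, η ∈ A`, the distance `edist ξ η` equals the infimum of the
lengths (total variations) of continuous paths from `ξ` to `η` lying in `A`.  Consequently the
embedding of `X` (with its `l¹` path metric) into `l¹(H)` is an isometry. -/
theorem stmt15 {V H : Type*} (M : CubeSystem V H) (ξ η : lp (fun _ : H => ℝ) 1)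
    (hξ : M.memA ξ) (hη : M.memA η) :
    edist ξ η = sInf {L : ENNReal | ∃ γ : ℝ → lp (fun _ : H => ℝ) 1,
      γ 0 = ξ ∧ γ 1 = η ∧ ContinuousOn γ (Set.Icc 0 1) ∧
      (∀ t ∈ Set.Icc (0:ℝ) 1, M.memA (γ t)) ∧ L = eVariationOn γ (Set.Icc 0 1)} := by
  apply le_antisymm
  · apply le_sInf
    rintro L ⟨γ, hγ0, hγ1, _, _, rfl⟩
    have h01 : (0:ℝ) ∈ Set.Icc (0:ℝ) 1 := ⟨le_refl 0, zero_le_one⟩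
    have h11 : (1:ℝ) ∈ Set.Icc (0:ℝ) 1 := ⟨zero_le_one, le_refl 1⟩
    have := eVariationOn.edist_le γ h01 h11
    rwa [hγ0, hγ1] at this
  · obtain ⟨γ, h0, h1, hc, hm, hv⟩ :=
      Stmt15Aux.exists_path M ({h | ξ h ≠ η h}.ncard) ξ η hξ hη le_rfl 0 1 zero_lt_one
    exact sInf_le_of_le ⟨γ, h0, h1, hc, hm, rfl⟩ hv
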